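/- Let Γ be a group containing two subgroups Λ' and Λ'' that are both maximal abelian subgroups which are normal and of finite index in Γ. Suppose moreover that Λ' and Λ'' are finitely generated free abelian (so that a finite-index subgroup spans the same rational vector space). Then Λ' = Λ''. -/

import Mathlib

/-- If a group `Γ` contains two subgroups `Λ'`, `Λ''`, each abelian, normal, of finite
index, free abelian of the same finite rank `n`, and each maximal among abelian normal
finite-index subgroups of `Γ`, then `Λ' = Λ''`. -/
theorem stmt15 (Γ : Type*) [Group Γ] (n : ℕ) (Λ' Λ'' : Subgroup Γ)
    (h1 : IsMulCommutative Λ') (h2 : Λ'.Normal) (h3 : Λ'.FiniteIndex)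
    (h4 : Nonempty (Λ' ≃* Multiplicative (Fin n → ℤ)))
    (hmax1 : ∀ K : Subgroup Γ, IsMulCommutative K → K.Normal → K.FiniteIndex →
      Λ' ≤ K → Λ' = K)
    (h1' : IsMulCommutative Λ'') (h2' : Λ''.Normal) (h3' : Λ''.FiniteIndex)
    (h4' : Nonempty (Λ'' ≃* Multiplicative (Fin n → ℤ)))
    (hmax2 : ∀ K : Subgroup Γ, IsMulCommutative K → K.Normal → K.FiniteIndex →
      Λ'' ≤ K → Λ'' = K) :
    Λ' = Λ'' := by
  obtain ⟨e⟩ := h4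
  -- key fact: every element of Λ'' commutes with every element of Λ'
  have key : ∀ a ∈ Λ', ∀ b ∈ Λ'', b * a = a * b := by
    intro a ha b hb
    set m := Λ''.index with hmdef
    have hm : m ≠ 0 := h3'.index_ne_zero
    have ham : a ^ m ∈ Λ'' := Λ''.pow_index_mem a
    have hx : b * a * b⁻¹ ∈ Λ' := h2.conj_mem a ha b
    -- b commutes with a^m since both are in the abelian Λ''
    have hcomm : b * a ^ m * b⁻¹ = a ^ m := by
      have h := Λ''.mul_comm_of_mem_isMulCommutative hb ham
      rw [h, mul_assoc, mul_inv_cancel, mul_one]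
    -- hence (b a b⁻¹)^m = a^m, and torsion-freeness of Λ' gives b a b⁻¹ = a
    have hpow : (b * a * b⁻¹) ^ m = a ^ m := by
      rw [conj_pow, hcomm]
    have hsub : (⟨b * a * b⁻¹, hx⟩ : Λ') ^ m = (⟨a, ha⟩ : Λ') ^ m := by
      ext
      push_cast
      exact hpow
    have hmap := congrArg e hsub
    rw [map_pow, map_pow] at hmap
    have hfun : m • Multiplicative.toAdd (e ⟨b * a * b⁻¹, hx⟩)
        = m • Multiplicative.toAdd (e ⟨a, ha⟩) := by
      simpa using congrArg Multiplicative.toAdd hmap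
    have heq : Multiplicative.toAdd (e ⟨b * a * b⁻¹, hx⟩)
        = Multiplicative.toAdd (e ⟨a, ha⟩) := by
      funext i
      have h := congrFun hfun i
      simp only [Pi.smul_apply, nsmul_eq_mul] at h
      exact mul_left_cancel₀ (by exact_mod_cast hm) h
    have hsub2 : (⟨b * a * b⁻¹, hx⟩ : Λ') = ⟨a, ha⟩ :=
      e.injective (Multiplicative.toAdd.injective heq)
    have hba : b * a * b⁻¹ = a := congrArg Subtype.val hsub2
    calc b * a = b * a * b⁻¹ * b := by group
    _ = a * b := by rw [hba]
  -- the join K = Λ' ⊔ Λ'' is abelian, normal, of finite index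
  set K := Λ' ⊔ Λ'' with hKdef
  -- every element of Λ' and of Λ'' centralizes all of K
  have hcenK : ∀ g : Γ, ((g ∈ Λ') ∨ (g ∈ Λ'')) → K ≤ Subgroup.centralizer {g} := by
    intro g hg
    refine sup_le ?_ ?_
    · intro x hx
      rw [Subgroup.mem_centralizer_iff]
      rintro y hy
      rw [Set.mem_singleton_iff] at hy
      rw [hy]
      rcases hg with hg | hg
      · exact Λ'.mul_comm_of_mem_isMulCommutative hg hx
      · exact key x hx g hg
    · intro x hx
      rw [Subgroup.mem_centralizer_iff]
      rintro y hy
      rw [Set.mem_singleton_iff] at hy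
      rw [hy]
      rcases hg with hg | hg
      · exact (key g hg x hx).symm
      · exact Λ''.mul_comm_of_mem_isMulCommutative hg hx
  have hcomm : IsMulCommutative K := by
    rw [← Subgroup.le_centralizer_iff_isMulCommutative]
    refine sup_le ?_ ?_
    · intro g hg
      rw [Subgroup.mem_centralizer_iff]
      intro h hh
      have h2 := hcenK g (Or.inl hg) hh
      rw [Subgroup.mem_centralizer_iff] at h2
      exact (h2 g rfl).symm
    · intro g hg
      rw [Subgroup.mem_centralizer_iff]
      intro h hh
      have h2 := hcenK g (Or.inr hg) hh
      rw [Subgroup.mem_centralizer_iff] at h2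
      exact (h2 g rfl).symm
  have hnormal : K.Normal := Subgroup.sup_normal Λ' Λ''
  have hle : Λ' ≤ K := le_sup_left
  have hle' : Λ'' ≤ K := le_sup_right
  have hfi : K.FiniteIndex := Subgroup.finiteIndex_of_le hle
  have e1 : Λ' = K := hmax1 K hcomm hnormal hfi hle
  have e2 : Λ'' = K := hmax2 K hcomm hnormal hfi hle'
  rw [e1, e2]
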